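/- In the unsplittable TWF derivation, let U = {n : Q_n < WL'} where WL' is the water level for (Q, (M-1)*c) with c = a^(m) > 0 and M >= 2, and let g^*_n be the water-filling increments for (Q, M*c). Then for every n in U, g^*_n > (c - sum_{n' not in U} g^*_{n'}) / |U|, and for every n not in U, g^*_n <= (c - sum_{n' not in U} g^*_{n'}) / |U|. Consequently p_n = max(0, (g^*_n - (c - sum_{n' not in U} g^*_{n'})/|U|) / ((M-1)c)) is strictly positive exactly on U. -/

import Mathlib

/-- Support lemma of the unsplittable TWF derivation: with `U` the set of servers
strictly below the water level for `(M-1)c` arrivals and `g` the water-filling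
increments for `Mc` arrivals, the threshold `T = (c - ∑_{n∉U} g n)/|U|` separates
`U` from its complement, and the uTWF probability is strictly positive exactly
on `U`. -/
theorem uTWF_support (N M : ℕ) (hM : 2 ≤ M) (Q : Fin N → ℝ) (hQ : ∀ n, 0 ≤ Q n)
    (c : ℝ) (hc : 0 < c) (WL' WL : ℝ)
    (hWL' : ∑ n, max 0 (WL' - Q n) = ((M:ℝ) - 1) * c)
    (hWL : ∑ n, max 0 (WL - Q n) = (M:ℝ) * c)
    (g : Fin N → ℝ) (hg : g = fun n => max (Q n) WL - Q n)
    (U : Finset (Fin N)) (hU : U = Finset.univ.filter fun n => Q n < WL')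
    (T : ℝ) (hT : T = (c - ∑ n ∈ Uᶜ, g n) / (U.card : ℝ)) :
    (∀ n ∈ U, T < g n) ∧ (∀ n ∉ U, g n ≤ T) ∧
    (∀ n, 0 < max 0 ((g n - T) / (((M:ℝ)-1)*c)) ↔ n ∈ U) := by
  have hM' : (2:ℝ) ≤ (M:ℝ) := by exact_mod_cast hM
  have hM1 : (0:ℝ) < ((M:ℝ) - 1) * c := by nlinarith
  have hg' : ∀ n, g n = max 0 (WL - Q n) := by
    intro n; rw [hg]; dsimp only
    rcases le_total (Q n) WL with h | h
    · rw [max_eq_right h, max_eq_right (by linarith)]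
    · rw [max_eq_left h, max_eq_left (by linarith)]; ring
  have hmemU : ∀ n, n ∈ U ↔ Q n < WL' := by
    intro n; simp [hU]
  have hWLlt : WL' < WL := by
    by_contra h
    push_neg at h
    have hle : (M:ℝ) * c ≤ ((M:ℝ)-1) * c := by
      rw [← hWL, ← hWL']
      exact Finset.sum_le_sum fun n _ => max_le_max le_rfl (by linarith)
    nlinarith
  have hUne : U.Nonempty := by
    by_contra h
    rw [Finset.not_nonempty_iff_eq_empty] at h
    have hz : ∑ n, max 0 (WL' - Q n) = 0 := by
      apply Finset.sum_eq_zero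
      intro n _
      have hn : ¬ Q n < WL' := fun hlt =>
        (by simp [h] : n ∉ (∅ : Finset (Fin N))) (h ▸ (hmemU n).2 hlt)
      rw [max_eq_left (by linarith [not_lt.mp hn])]
    rw [hWL'] at hz; nlinarith
  have hcard : (0:ℝ) < (U.card : ℝ) := by
    exact_mod_cast Finset.card_pos.mpr hUne
  have h1 : ∑ n ∈ U, max 0 (WL' - Q n) + ∑ n ∈ Uᶜ, max 0 (WL' - Q n)
      = ((M:ℝ)-1)*c := by rw [Finset.sum_add_sum_compl, hWL']
  have e1 : ∑ n ∈ U, max 0 (WL' - Q n) = ∑ n ∈ U, (WL' - Q n) :=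
    Finset.sum_congr rfl fun n hn => max_eq_right (by linarith [(hmemU n).1 hn])
  have e2 : ∑ n ∈ Uᶜ, max 0 (WL' - Q n) = 0 :=
    Finset.sum_eq_zero fun n hn => max_eq_left (by
      have hn' : ¬ Q n < WL' := fun hlt => (Finset.mem_compl.mp hn) ((hmemU n).2 hlt)
      linarith [not_lt.mp hn'])
  have h1a : ∑ n ∈ U, (WL' - Q n) = ((M:ℝ)-1)*c := by
    rw [← e1]; linarith [h1, e2]
  have h2 : ∑ n ∈ U, g n + ∑ n ∈ Uᶜ, g n = (M:ℝ)*c := by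
    rw [Finset.sum_add_sum_compl, ← hWL]
    exact Finset.sum_congr rfl fun n _ => hg' n
  have hgU : ∀ n ∈ U, g n = WL - Q n := by
    intro n hn
    have hlt := (hmemU n).1 hn
    rw [hg' n, max_eq_right (by linarith)]
  have e3 : ∑ n ∈ U, g n = ∑ n ∈ U, (WL - Q n) := Finset.sum_congr rfl hgU
  have e4 : ∑ n ∈ U, (WL - Q n) = (U.card : ℝ) * (WL - WL') + ((M:ℝ)-1)*c := by
    have e5 : ∑ n ∈ U, (WL - Q n) = ∑ n ∈ U, ((WL - WL') + (WL' - Q n)) := by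
      apply Finset.sum_congr rfl; intros; ring
    rw [e5, Finset.sum_add_distrib, Finset.sum_const, h1a, nsmul_eq_mul]
  have hTeq : T = WL - WL' := by
    have hSc : ∑ n ∈ Uᶜ, g n = c - (U.card:ℝ)*(WL-WL') := by
      have h2' := h2
      rw [e3, e4] at h2'
      nlinarith [h2']
    rw [hT, hSc]
    field_simp
    ring
  have hUpper : ∀ n ∉ U, g n ≤ T := by
    intro n hn
    have hn' : WL' ≤ Q n := not_lt.mp (fun hlt => hn ((hmemU n).2 hlt))
    rw [hg' n, hTeq]
    exact max_le (by linarith) (by linarith)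
  have hLower : ∀ n ∈ U, T < g n := by
    intro n hn
    have hlt := (hmemU n).1 hn
    rw [hgU n hn, hTeq]
    linarith
  refine ⟨hLower, hUpper, fun n => ?_⟩
  constructor
  · intro hpos
    by_contra hn
    have hle : g n ≤ T := hUpper n hn
    have : (g n - T) / (((M:ℝ)-1)*c) ≤ 0 :=
      div_nonpos_of_nonpos_of_nonneg (by linarith) (le_of_lt hM1)
    have : max 0 ((g n - T) / (((M:ℝ)-1)*c)) = 0 := max_eq_left this
    linarith
  · intro hn
    have hlt := hLower n hn
    have hq : 0 < (g n - T) / (((M:ℝ)-1)*c) := div_pos (by linarith) hM1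
    exact lt_max_iff.mpr (Or.inr hq)
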